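/- (Single dual-particle duality function) For the duality function D(η, ξ) of ASEP(q,j) evaluated at the dual configuration ξ^{(i)} with a single particle at site i, one has D(η, ξ^{(i)}) = q^{4ji-1}/(q^{2j} - q^{-2j}) · (q^{2N_i(η)} - q^{2N_{i+1}(η)}), where N_i(η) = ∑_{k ≥ i} η_k. -/

import Mathlib

/-- The q-number [n]_q = (q^n - q^{-n})/(q - q^{-1}). -/
noncomputable def qNum (q : ℝ) (n : ℕ) : ℝ := (q ^ n - q⁻¹ ^ n) / (q - q⁻¹)

/-- The q-factorial [n]_q!. -/
noncomputable def qFact (q : ℝ) (n : ℕ) : ℝ := ∏ k ∈ Finset.Icc 1 n, qNum q k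

/-- The q-binomial coefficient. -/
noncomputable def qBinom (q : ℝ) (n k : ℕ) : ℝ := qFact q n / (qFact q k * qFact q (n - k))

/-- N_i(η) = ∑_{k ≥ i} η_k. -/
noncomputable def Nright (η : ℤ → ℕ) (i : ℤ) : ℤ :=
  ∑ᶠ k : ℤ, if i ≤ k then (η k : ℤ) else 0

/-- The self-duality function
D(η,ξ) = ∏_{m∈ℤ} [binom(η_m,ξ_m)_q/binom(2j,ξ_m)_q] q^{(η_m-ξ_m)[2∑_{k<m}ξ_k+ξ_m]+4jmξ_m} 1_{ξ_m≤η_m},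
with J = 2j. -/
noncomputable def Dfun (q : ℝ) (J : ℕ) (η ξ : ℤ → ℕ) : ℝ :=
  ∏ᶠ m : ℤ,
    (qBinom q (η m) (ξ m) / qBinom q J (ξ m)) *
      q ^ (((η m : ℤ) - ξ m) * (2 * (∑ᶠ k : ℤ, if k < m then (ξ k : ℤ) else 0) + ξ m)
            + 2 * J * m * ξ m) *
      (if ξ m ≤ η m then 1 else 0)

section aux

variable {q : ℝ}

lemma qNum_pos (hq0 : 0 < q) (hq1 : q < 1) {k : ℕ} (hk : 1 ≤ k) : 0 < qNum q k := by
  have hiq : 1 < q⁻¹ := (one_lt_inv_iff₀).mpr ⟨hq0, hq1⟩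
  have h1 : q ^ k < 1 := pow_lt_one₀ hq0.le hq1 (by omega)
  have h2 : 1 < q⁻¹ ^ k := one_lt_pow₀ hiq (by omega)
  exact div_pos_of_neg_of_neg (by linarith) (by linarith)

lemma qFact_pos (hq0 : 0 < q) (hq1 : q < 1) (n : ℕ) : 0 < qFact q n := by
  refine Finset.prod_pos fun k hk => qNum_pos hq0 hq1 ?_
  exact (Finset.mem_Icc.mp hk).1

lemma qFact_zero : qFact q 0 = 1 := by simp [qFact]

lemma qNum_one (hq0 : 0 < q) (hq1 : q < 1) : qNum q 1 = 1 := by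
  have hiq : 1 < q⁻¹ := (one_lt_inv_iff₀).mpr ⟨hq0, hq1⟩
  have : q - q⁻¹ ≠ 0 := by linarith
  simp [qNum, div_self this]

lemma qFact_one (hq0 : 0 < q) (hq1 : q < 1) : qFact q 1 = 1 := by
  simp [qFact, qNum_one hq0 hq1]

lemma qFact_succ (n : ℕ) : qFact q (n + 1) = qFact q n * qNum q (n + 1) :=
  Finset.prod_Icc_succ_top (by omega) _

lemma qBinom_zero (hq0 : 0 < q) (hq1 : q < 1) (n : ℕ) : qBinom q n 0 = 1 := by
  simp [qBinom, qFact_zero, div_self (qFact_pos hq0 hq1 n).ne']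

lemma qBinom_one (hq0 : 0 < q) (hq1 : q < 1) {n : ℕ} (hn : 1 ≤ n) :
    qBinom q n 1 = qNum q n := by
  obtain ⟨m, rfl⟩ := Nat.exists_eq_add_of_le hn
  rw [qBinom, qFact_one hq0 hq1]
  have : 1 + m - 1 = m := by omega
  rw [this, one_mul, Nat.add_comm 1 m, qFact_succ]
  rw [mul_comm, mul_div_assoc, div_self (qFact_pos hq0 hq1 m).ne', mul_one]

lemma prod_zpow_sum (hq : q ≠ 0) (t : Finset ℤ) (f : ℤ → ℤ) :
    ∏ m ∈ t, q ^ f m = q ^ ∑ m ∈ t, f m := by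
  classical
  induction t using Finset.induction with
  | empty => simp
  | @insert a s h ih => rw [Finset.prod_insert h, Finset.sum_insert h, zpow_add₀ hq, ih]

end aux

/-- (Single dual-particle duality function)
D(η, ξ^{(i)}) = q^{4ji-1}/(q^{2j}-q^{-2j}) · (q^{2N_i(η)} - q^{2N_{i+1}(η)}), J = 2j. -/
theorem stmt14 (q : ℝ) (hq0 : 0 < q) (hq1 : q < 1) (J : ℕ) (hJ : 1 ≤ J)
    (η : ℤ → ℕ) (hb : ∀ k, η k ≤ J)
    (hfin : ∀ m : ℤ, {k : ℤ | m ≤ k ∧ η k ≠ 0}.Finite) (i : ℤ) :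
    Dfun q J η (fun m => if m = i then 1 else 0)
      = q ^ (2 * (J : ℤ) * i - 1) / (q ^ (J : ℤ) - q ^ (-(J : ℤ))) *
        (q ^ (2 * Nright η i) - q ^ (2 * Nright η (i + 1))) := by
  classical
  have hq : q ≠ 0 := hq0.ne'
  have hiq : 1 < q⁻¹ := (one_lt_inv_iff₀).mpr ⟨hq0, hq1⟩
  have hsub : q - q⁻¹ < 0 := by linarith
  -- the generic factor of the product
  set ξ : ℤ → ℕ := fun m => if m = i then 1 else 0 with hξdef
  set P : ℤ → ℝ := fun m =>
    (qBinom q (η m) (ξ m) / qBinom q J (ξ m)) *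
      q ^ (((η m : ℤ) - ξ m) * (2 * (∑ᶠ k : ℤ, if k < m then (ξ k : ℤ) else 0) + ξ m)
            + 2 * J * m * ξ m) *
      (if ξ m ≤ η m then 1 else 0) with hPdef
  have hD : Dfun q J η ξ = ∏ᶠ m : ℤ, P m := rfl
  -- the inner sum
  have hinner : ∀ m : ℤ,
      (∑ᶠ k : ℤ, if k < m then (ξ k : ℤ) else 0) = if i < m then 1 else 0 := by
    intro m
    rw [finsum_eq_single _ i (by intro k hk; simp [hξdef, hk])]
    simp [hξdef]
  -- finite sets
  set t : Finset ℤ := (hfin (i + 1)).toFinset with htdef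
  have hmem_t : ∀ {k : ℤ}, k ∈ t ↔ i + 1 ≤ k ∧ η k ≠ 0 := by
    intro k; rw [htdef, Set.Finite.mem_toFinset]; rfl
  have hit : i ∉ t := by
    intro h; exact absurd (hmem_t.mp h).1 (by omega)
  -- value of P away from i
  have hPne : ∀ m : ℤ, m ≠ i → P m = q ^ (2 * (η m : ℤ) * (if i < m then 1 else 0)) := by
    intro m hm
    have hξm : ξ m = 0 := by simp [hξdef, hm]
    rw [hPdef]
    simp only [hξm, hinner m, Nat.cast_zero, sub_zero, add_zero, mul_zero,
      qBinom_zero hq0 hq1, div_one, if_pos (Nat.zero_le _), mul_one]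
    ring_nf
  -- support of P
  have hsupp : Function.mulSupport P ⊆ ↑(insert i t) := by
    intro m hm
    simp only [Finset.coe_insert, Set.mem_insert_iff, Finset.mem_coe]
    by_contra hc
    push_neg at hc
    obtain ⟨hmi, hmt⟩ := hc
    apply hm
    rw [hPne m hmi]
    rcases Nat.eq_zero_or_pos (η m) with h0 | h0
    · simp [h0]
    · have : ¬ i < m := by
        intro hlt
        exact hmt (hmem_t.mpr ⟨by omega, by omega⟩)
      simp [this]
  have hprod : Dfun q J η ξ = P i * ∏ m ∈ t, P m := by
    rw [hD, finprod_eq_prod_of_mulSupport_subset _ hsupp, Finset.prod_insert hit]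
  -- the product over t
  have hNt : Nright η (i + 1) = ∑ m ∈ t, (η m : ℤ) := by
    rw [Nright, finsum_eq_sum_of_support_subset _ (s := t) ?_]
    · refine Finset.sum_congr rfl fun m hm => if_pos (hmem_t.mp hm).1
    · intro k hk
      simp only [Function.mem_support] at hk
      by_cases h : i + 1 ≤ k
      · simp only [if_pos h] at hk
        exact Finset.mem_coe.mpr (hmem_t.mpr ⟨h, by exact_mod_cast hk⟩)
      · simp [h] at hk
  have hprodt : ∏ m ∈ t, P m = q ^ (2 * Nright η (i + 1)) := by
    rw [Finset.prod_congr rfl (fun m hm => ?_), prod_zpow_sum hq, ← Finset.mul_sum, ← hNt]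
    have hm1 := (hmem_t.mp hm).1
    rw [hPne m (by omega), if_pos (by omega), mul_one]
  -- split Nright
  have hsplit : Nright η i = (η i : ℤ) + Nright η (i + 1) := by
    have hpt : ∀ k : ℤ, (if i ≤ k then (η k : ℤ) else 0)
        = (if k = i then (η i : ℤ) else 0) + (if i + 1 ≤ k then (η k : ℤ) else 0) := by
      intro k
      rcases lt_trichotomy k i with h | h | h
      · rw [if_neg (by omega), if_neg (by omega), if_neg (by omega)]; ring
      · subst h; rw [if_pos le_rfl, if_pos rfl, if_neg (by omega)]; ring
      · rw [if_pos (by omega), if_neg (by omega), if_pos (by omega)]; ring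
    have hf1 : (Function.support fun k : ℤ => if k = i then (η i : ℤ) else 0).Finite := by
      apply Set.Finite.subset (Set.finite_singleton i)
      intro k hk
      simp only [Function.mem_support] at hk
      have : k = i := by by_contra h; simp [h] at hk
      simp [this]
    have hf2 : (Function.support fun k : ℤ => if i + 1 ≤ k then (η k : ℤ) else 0).Finite := by
      apply Set.Finite.subset (hfin (i + 1))
      intro k hk
      simp only [Function.mem_support] at hk
      by_cases h : i + 1 ≤ k
      · simp only [if_pos h] at hk
        exact ⟨h, by exact_mod_cast hk⟩
      · simp [h] at hk
    rw [Nright, finsum_congr hpt, finsum_add_distrib hf1 hf2,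
      finsum_eq_single _ i (by intro k hk; simp [hk]), if_pos rfl]
    rfl
  -- nonvanishing of the main denominator
  have hJlt : q ^ (J : ℤ) < 1 := by
    rw [zpow_natCast]; exact pow_lt_one₀ hq0.le hq1 (by omega)
  have hJgt : 1 < q ^ (-(J : ℤ)) := by
    rw [zpow_neg, zpow_natCast]
    exact (one_lt_inv_iff₀).mpr ⟨pow_pos hq0 J, pow_lt_one₀ hq0.le hq1 (by omega)⟩
  have hB : q ^ (J : ℤ) - q ^ (-(J : ℤ)) ≠ 0 := by linarith
  -- main case split on η i
  rcases Nat.eq_zero_or_pos (η i) with h0 | h0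
  · -- η i = 0 : both sides vanish
    have hPi : P i = 0 := by
      rw [hPdef]
      simp only [hξdef, if_pos rfl, h0]
      norm_num
    rw [hprod, hPi, zero_mul, hsplit, h0, Nat.cast_zero, zero_add, sub_self, mul_zero]
  · -- η i ≥ 1
    have hPi : P i = (qNum q (η i) / qNum q J) * q ^ ((η i : ℤ) - 1 + 2 * (J : ℤ) * i) := by
      rw [hPdef]
      simp only [hinner i]
      simp only [hξdef, if_pos rfl, Nat.cast_one]
      rw [if_neg (lt_irrefl i), if_pos (by omega : 1 ≤ η i),
        qBinom_one hq0 hq1 h0, qBinom_one hq0 hq1 hJ]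
      ring_nf
    have hqNum : ∀ n : ℕ, qNum q n = (q ^ (n : ℤ) - q ^ (-(n : ℤ))) / (q - q⁻¹) := by
      intro n
      rw [qNum, zpow_natCast, zpow_neg, zpow_natCast, inv_pow]
    have hkey : ∀ a b c : ℤ, (q ^ a - q ^ b) * q ^ c = q ^ (a + c) - q ^ (b + c) := by
      intro a b c
      rw [sub_mul, ← zpow_add₀ hq, ← zpow_add₀ hq]
    have hA : q - q⁻¹ ≠ 0 := hsub.ne
    have hqJ : qNum q J ≠ 0 := (qNum_pos hq0 hq1 hJ).ne'
    rw [hprod, hPi, hprodt, hsplit]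
    rw [hqNum (η i), hqNum J]
    have hDiv : ∀ X : ℝ, X / (q - q⁻¹) / ((q ^ (J : ℤ) - q ^ (-(J : ℤ))) / (q - q⁻¹))
        = X / (q ^ (J : ℤ) - q ^ (-(J : ℤ))) := by
      intro X; rw [div_div_div_eq, mul_comm X, mul_div_mul_left _ _ hA]
    rw [hDiv]
    rw [div_mul_eq_mul_div, div_mul_eq_mul_div, hkey, hkey, div_mul_eq_mul_div,
      mul_sub, ← zpow_add₀ hq, ← zpow_add₀ hq]
    congr 2 <;> ring
  done
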